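/- Let n ≥ 1 be an integer with n ≢ 1 (mod 4), let g ≥ 1, let X be a positive definite symmetric real g×g matrix, and let A₁, …, A_n be symmetric real g×g matrices. Then the alternating trace vanishes: Σ_{σ ∈ S_n} sgn(σ) · tr(X⁻¹A_{σ(1)} X⁻¹A_{σ(2)} ⋯ X⁻¹A_{σ(n)}) = 0. -/
import Mathlib

open Matrix Equiv List

section Aux

/-- `Fin.revPerm` on `Fin (n+1)` decomposes as a rotation following the embedded
reversal of `Fin n`. -/
lemma revPerm_succ_eq (n : ℕ) :
    (Fin.revPerm : Equiv.Perm (Fin (n + 1))) =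
      finRotate (n + 1) *
        ((Fin.revPerm : Equiv.Perm (Fin n)).viaFintypeEmbedding Fin.castSuccEmb) := by
  ext b
  refine Fin.lastCases ?_ (fun i => ?_) b
  · rw [Equiv.Perm.mul_apply, Equiv.Perm.viaFintypeEmbedding_apply_notMem_range]
    · simp [finRotate_last]
    · rintro ⟨a, ha⟩
      have : (Fin.castSuccEmb a : Fin (n + 1)) = a.castSucc := rfl
      rw [this] at ha
      exact absurd ha (Fin.castSucc_lt_last a).ne
  · rw [Equiv.Perm.mul_apply,
      show (i.castSucc : Fin (n + 1)) = Fin.castSuccEmb i from rfl,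
      Equiv.Perm.viaFintypeEmbedding_apply_image]
    cases n with
    | zero => exact absurd i.2 (by omega)
    | succ m =>
      rw [show ((Fin.revPerm : Equiv.Perm (Fin (m + 1))) i) = i.rev from rfl,
        show (Fin.castSuccEmb i.rev : Fin (m + 2)) = i.rev.castSucc from rfl,
        finRotate_succ_apply]
      have hi := i.2
      simp [Fin.rev, Fin.add_def]
      rw [Nat.mod_eq_of_lt (by omega)]
      omega

lemma sign_revPerm_eq (n : ℕ) :
    Equiv.Perm.sign (Fin.revPerm : Equiv.Perm (Fin n)) = (-1 : ℤˣ) ^ (n * (n - 1) / 2) := by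
  induction n with
  | zero =>
    simp [show (Fin.revPerm : Equiv.Perm (Fin 0)) = 1 from Subsingleton.elim _ _]
  | succ m ih =>
    rw [revPerm_succ_eq, Equiv.Perm.sign_mul, sign_finRotate, Equiv.Perm.viaFintypeEmbedding_sign, ih,
      ← pow_add]
    congr 1
    cases m with
    | zero => rfl
    | succ k =>
      have h1 : (k + 1 + 1) * (k + 1) = k * (k + 1) + 2 * (k + 1) := by ring
      have h2 : (k + 1) * k = k * (k + 1) := by ring
      obtain ⟨t, ht⟩ := Nat.even_mul_succ_self k
      simp only [Nat.add_sub_cancel]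
      rw [h1, h2]
      omega

lemma trace_rotate_one {g : ℕ} (l : List (Matrix (Fin g) (Fin g) ℝ)) :
    Matrix.trace (l.rotate 1).prod = Matrix.trace l.prod := by
  cases l with
  | nil => simp
  | cons a t =>
    rw [List.rotate_cons_succ, List.rotate_zero, List.prod_append, List.prod_singleton,
      List.prod_cons, Matrix.trace_mul_comm]

lemma map_finRange_finRotate {α : Type*} (n : ℕ) (f : Fin n → α) :
    (List.finRange n).map (fun i => f (finRotate n i)) = ((List.finRange n).map f).rotate 1 := by
  apply List.ext_getElem (by simp)
  intro k h1 h2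
  rw [List.getElem_map, List.getElem_rotate, List.getElem_map]
  simp only [List.length_map, List.length_finRange] at h1 h2 ⊢
  rw [List.getElem_finRange, List.getElem_finRange]
  congr 1
  cases n with
  | zero => omega
  | succ m =>
    rw [finRotate_succ_apply]
    ext
    simp [Fin.add_def]

lemma map_finRange_rev {α : Type*} (n : ℕ) (f : Fin n → α) :
    (List.finRange n).map (fun i => f i.rev) = ((List.finRange n).map f).reverse := by
  rw [← List.map_reverse, List.finRange_reverse, List.map_map]
  rfl

lemma shunt {g : ℕ} {ι : Type*} (Y : Matrix (Fin g) (Fin g) ℝ) (f : ι → Matrix (Fin g) (Fin g) ℝ)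
    (l : List ι) :
    Y * (l.map fun j => f j * Y).prod = (l.map fun j => Y * f j).prod * Y := by
  induction l with
  | nil => simp
  | cons a t ih =>
    simp only [List.map_cons, List.prod_cons]
    rw [← mul_assoc, ← mul_assoc, mul_assoc (Y * f a), ih, ← mul_assoc]

end Aux

/-- For `n ≢ 1 (mod 4)`, the alternating trace
`Σ_{σ ∈ S_n} sgn(σ) · tr(X⁻¹A_{σ(1)} ⋯ X⁻¹A_{σ(n)})` vanishes, for `X` a positive definite
symmetric real `g × g` matrix and `A₁, …, A_n` symmetric real `g × g` matrices.
This is the vanishing of the invariant form `ωⁿ = tr((X⁻¹dX)ⁿ)` unless `n ≡ 1 (mod 4)`. -/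
theorem alternating_trace_vanishes_of_ne_one_mod_four
    (n : ℕ) (hn : 1 ≤ n) (hmod : n % 4 ≠ 1)
    (g : ℕ) (hg : 1 ≤ g)
    (X : Matrix (Fin g) (Fin g) ℝ) (hX : X.PosDef)
    (A : Fin n → Matrix (Fin g) (Fin g) ℝ) (hA : ∀ i, (A i).IsSymm) :
    ∑ σ : Equiv.Perm (Fin n),
      ((Equiv.Perm.sign σ : ℤ) : ℝ) *
        Matrix.trace (((List.finRange n).map fun i => X⁻¹ * A (σ i)).prod) = 0 := by
  classical
  set F : Equiv.Perm (Fin n) → ℝ :=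
    fun σ => Matrix.trace (((List.finRange n).map fun i => X⁻¹ * A (σ i)).prod) with hF
  set S : ℝ := ∑ σ : Equiv.Perm (Fin n), ((Equiv.Perm.sign σ : ℤ) : ℝ) * F σ with hS
  have hdet : IsUnit X.det := (hX.det_pos.ne').isUnit
  have hXt : Xᵀ = X := hX.1.eq
  have hXinvT : (X⁻¹)ᵀ = X⁻¹ := by rw [Matrix.transpose_nonsing_inv, hXt]
  -- the key reindexing principle
  have key : ∀ τ : Equiv.Perm (Fin n), (∀ σ, F (σ * τ) = F σ) →
      Equiv.Perm.sign τ = -1 → S = 0 := by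
    intro τ hτ hsτ
    have h1 : S = ∑ σ : Equiv.Perm (Fin n),
        ((Equiv.Perm.sign (σ * τ) : ℤ) : ℝ) * F (σ * τ) := by
      rw [hS]
      exact (Equiv.sum_comp (Equiv.mulRight τ)
        (fun σ => ((Equiv.Perm.sign σ : ℤ) : ℝ) * F σ)).symm
    have h2 : ∑ σ : Equiv.Perm (Fin n),
        ((Equiv.Perm.sign (σ * τ) : ℤ) : ℝ) * F (σ * τ) = -S := by
      rw [hS, ← Finset.sum_neg_distrib]
      apply Finset.sum_congr rfl
      intro σ _
      rw [hτ σ, Equiv.Perm.sign_mul, hsτ]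
      push_cast
      ring
    rw [h2] at h1
    linarith
  rcases Nat.even_or_odd n with he | ho
  · -- n even : use the rotation
    obtain ⟨m, rfl⟩ : ∃ m, n = m + 1 := ⟨n - 1, by omega⟩
    refine key (finRotate (m + 1)) ?_ ?_
    · intro σ
      have : ((List.finRange (m+1)).map fun i => X⁻¹ * A ((σ * finRotate (m+1)) i)) =
          ((List.finRange (m+1)).map fun i => X⁻¹ * A (σ i)).rotate 1 := by
        rw [← map_finRange_finRotate (m+1) (fun j => X⁻¹ * A (σ j))]
        rfl
      rw [hF]
      simp only
      rw [this, trace_rotate_one]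
    · rw [sign_finRotate]
      refine Odd.neg_one_pow ?_
      rcases he with ⟨t, ht⟩
      exact ⟨t - 1, by omega⟩
  · -- n odd : use the reversal
    refine key Fin.revPerm ?_ ?_
    · intro σ
      have h1 : ((List.finRange n).map fun i => X⁻¹ * A ((σ * (Fin.revPerm : Equiv.Perm (Fin n))) i)) =
          ((List.finRange n).map fun i => X⁻¹ * A (σ i)).reverse := by
        rw [← map_finRange_rev n (fun j => X⁻¹ * A (σ j))]
        rfl
      rw [hF]
      simp only
      rw [h1, ← Matrix.trace_transpose, Matrix.transpose_list_prod, List.map_reverse,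
        List.reverse_reverse]
      have h2 : ((List.finRange n).map fun i => X⁻¹ * A (σ i)).map Matrix.transpose =
          (List.finRange n).map fun i => A (σ i) * X⁻¹ := by
        rw [List.map_map]
        apply List.map_congr_left
        intro i _
        show (X⁻¹ * A (σ i))ᵀ = A (σ i) * X⁻¹
        rw [Matrix.transpose_mul, hXinvT, (hA (σ i)).eq]
      rw [h2]
      have hs := shunt X⁻¹ (fun j => A (σ j)) (List.finRange n)
      set R := ((List.finRange n).map fun i => A (σ i) * X⁻¹).prod with hR
      set P := ((List.finRange n).map fun i => X⁻¹ * A (σ i)).prod with hP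
      have hs' : X⁻¹ * R = P * X⁻¹ := hs
      calc Matrix.trace R = Matrix.trace ((X * X⁻¹) * R) := by
            rw [Matrix.mul_nonsing_inv X hdet, one_mul]
        _ = Matrix.trace (X * (X⁻¹ * R)) := by rw [mul_assoc]
        _ = Matrix.trace (X * (P * X⁻¹)) := by rw [hs']
        _ = Matrix.trace ((P * X⁻¹) * X) := Matrix.trace_mul_comm _ _
        _ = Matrix.trace (P * (X⁻¹ * X)) := by rw [mul_assoc]
        _ = Matrix.trace P := by rw [Matrix.nonsing_inv_mul X hdet, mul_one]
    · rw [sign_revPerm_eq]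
      refine Odd.neg_one_pow ?_
      obtain ⟨k, rfl⟩ : ∃ k, n = 4 * k + 3 := by
        rcases ho with ⟨t, ht⟩
        refine ⟨(n - 3) / 4, by omega⟩
      have h3 : (4 * k + 3) * (4 * k + 3 - 1) = 2 * ((4 * k + 3) * (2 * k + 1)) := by
        have h4 : 4 * k + 3 - 1 = 4 * k + 2 := by omega
        rw [h4]; ring
      rw [h3, Nat.mul_div_cancel_left _ (by norm_num)]
      exact ⟨4 * k * k + 5 * k + 1, by ring⟩
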